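/- For every m ≥ 6, the weight spectrum of RM(m-3,m) equals the set of all even integers in [0, 2^m] except {2, 4, 6, 10, 2^m−10, 2^m−6, 2^m−4, 2^m−2}; equivalently it equals {0, 8} ∪ {12, 14, 16, …, 2^m−12} ∪ {2^m−8, 2^m}. -/

import Mathlib

open MvPolynomial Pointwise

/-- The binary Reed-Muller code of order `r` in `m` variables, viewed as the set of
Boolean functions represented by polynomials of total degree at most `r`. -/
def RM (r m : ℕ) : Set ((Fin m → ZMod 2) → ZMod 2) :=
  {f | ∃ p : MvPolynomial (Fin m) (ZMod 2), p.totalDegree ≤ r ∧ ∀ x, eval x p = f x}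

/-- Hamming weight of a Boolean function: number of inputs where it is nonzero. -/
def wt {m : ℕ} (f : (Fin m → ZMod 2) → ZMod 2) : ℕ :=
  Fintype.card {x // f x ≠ 0}

/-- Weight spectrum of `RM(r,m)`. -/
def spec (r m : ℕ) : Set ℕ := {w | ∃ f ∈ RM r m, wt f = w}

lemma sum_zmod2 {M : Type*} [AddCommMonoid M] (g : ZMod 2 → M) :
    ∑ b : ZMod 2, g b = g 0 + g 1 := by
  rw [show (Finset.univ : Finset (ZMod 2)) = {0, 1} by decide, Finset.sum_pair (by decide)]

lemma sum_pow_zmod2 (k : ℕ) : ∑ b : ZMod 2, b ^ k = if k = 0 then 0 else 1 := by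
  rw [sum_zmod2]
  cases k with
  | zero => decide
  | succ k => simp [zero_pow]

lemma sum_eval_eq_zero {m : ℕ} (p : MvPolynomial (Fin m) (ZMod 2))
    (h : p.totalDegree < m) : ∑ x : Fin m → ZMod 2, eval x p = 0 := by
  conv_lhs => rw [MvPolynomial.as_sum p]
  simp only [map_sum, eval_monomial]
  rw [Finset.sum_comm]
  apply Finset.sum_eq_zero
  intro A hA
  rw [← Finset.mul_sum]
  have h1 : ∀ x : Fin m → ZMod 2, (A.prod fun n e => x n ^ e) = ∏ i, x i ^ A i := by
    intro x; exact Finsupp.prod_pow A _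
  simp only [h1]
  have h2 : ∑ x : Fin m → ZMod 2, ∏ i, x i ^ A i
      = ∏ i, ∑ b : ZMod 2, b ^ A i := by
    rw [Finset.prod_univ_sum (fun _ => Finset.univ) (fun i b => b ^ A i),
      Fintype.piFinset_univ]
  rw [h2]
  -- some A i must be 0, else degree ≥ m
  have h3 : ∃ i, A i = 0 := by
    by_contra hc
    push_neg at hc
    have hsupp : A.support = Finset.univ := by
      ext i; simp [Finsupp.mem_support_iff, hc i]
    have hdeg : A.sum (fun _ e => e) ≤ p.totalDegree :=
      MvPolynomial.le_totalDegree hA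
    have : m ≤ A.sum (fun _ e => e) := by
      rw [Finsupp.sum, hsupp]
      calc m = ∑ _i : Fin m, 1 := by simp
      _ ≤ ∑ i : Fin m, A i :=
          Finset.sum_le_sum fun i _ => Nat.one_le_iff_ne_zero.mpr (hc i)
    omega
  obtain ⟨i, hi⟩ := h3
  rw [Finset.prod_eq_zero (Finset.mem_univ i) (by rw [sum_pow_zmod2]; simp [hi])]
  ring


-- assume p1 contents compile; test new part standalone with the defs repeated


/-- sign character -/
def sgn (a : ZMod 2) : ℤ := 1 - 2 * (a.val : ℤ)

lemma sgn_add (a b : ZMod 2) : sgn (a + b) = sgn a * sgn b := by revert a b; decide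

lemma sgn_zero : sgn 0 = 1 := by decide

lemma sgn_sum {ι : Type*} (s : Finset ι) (g : ι → ZMod 2) :
    sgn (∑ i ∈ s, g i) = ∏ i ∈ s, sgn (g i) := by
  induction s using Finset.cons_induction with
  | empty => simpa using sgn_zero
  | cons i s hi ih => rw [Finset.sum_cons, Finset.prod_cons, sgn_add, ih]

/-- dot product -/
def dotp {m : ℕ} (u x : Fin m → ZMod 2) : ZMod 2 := ∑ i, u i * x i

lemma dotp_add_right {m : ℕ} (u x y : Fin m → ZMod 2) :
    dotp u (x + y) = dotp u x + dotp u y := by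
  simp [dotp, mul_add, Finset.sum_add_distrib]

lemma dotp_add_left {m : ℕ} (u v x : Fin m → ZMod 2) :
    dotp (u + v) x = dotp u x + dotp v x := by
  simp [dotp, add_mul, Finset.sum_add_distrib]

lemma dotp_zero_left {m : ℕ} (x : Fin m → ZMod 2) : dotp 0 x = 0 := by
  simp [dotp]

lemma sum_sgn_dotp {m : ℕ} (z : Fin m → ZMod 2) :
    ∑ u : Fin m → ZMod 2, sgn (dotp u z) = if z = 0 then (2 ^ m : ℤ) else 0 := by
  have key : ∀ u : Fin m → ZMod 2, sgn (dotp u z) = ∏ i, sgn (u i * z i) := fun u =>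
    sgn_sum Finset.univ _
  simp only [key]
  rw [← Fintype.piFinset_univ,
    ← Finset.prod_univ_sum (fun _ => Finset.univ) (fun i b => sgn (b * z i))]
  have inner : ∀ i, (∑ b : ZMod 2, sgn (b * z i)) = if z i = 0 then 2 else 0 := by
    intro i
    rcases (by decide : ∀ c : ZMod 2, c = 0 ∨ c = 1) (z i) with h | h <;> rw [h] <;> decide
  simp only [inner]
  by_cases hz : z = 0
  · simp [hz, Finset.prod_ite_eq]
  · have : ∃ i, z i ≠ 0 := by
      by_contra hc; push_neg at hc; exact hz (funext hc)
    obtain ⟨i, hi⟩ := this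
    rw [Finset.prod_eq_zero (Finset.mem_univ i) (by simp [hi])]
    simp [hz]



-- inner products with evaluations of low degree polys vanish
lemma inner_eval_zero {m : ℕ} (hm : 3 ≤ m) {f : (Fin m → ZMod 2) → ZMod 2}
    (hf : f ∈ RM (m - 3) m) {q : MvPolynomial (Fin m) (ZMod 2)}
    (hq : q.totalDegree ≤ 2) :
    ∑ x : Fin m → ZMod 2, f x * eval x q = 0 := by
  obtain ⟨p, hp, hpe⟩ := hf
  have : ∀ x, f x * eval x q = eval x (p * q) := by
    intro x; rw [map_mul, hpe]
  simp only [this]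
  apply _root_.sum_eval_eq_zero
  have := MvPolynomial.totalDegree_mul p q
  omega

noncomputable def linPoly {m : ℕ} (u : Fin m → ZMod 2) : MvPolynomial (Fin m) (ZMod 2) :=
  ∑ i, C (u i) * X i

lemma eval_linPoly {m : ℕ} (u x : Fin m → ZMod 2) :
    eval x (linPoly u) = dotp u x := by
  simp [linPoly, dotp]

lemma totalDegree_linPoly {m : ℕ} (u : Fin m → ZMod 2) :
    (linPoly u).totalDegree ≤ 1 := by
  refine le_trans (MvPolynomial.totalDegree_finset_sum _ _) ?_
  apply Finset.sup_le
  intro i _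
  refine le_trans (MvPolynomial.totalDegree_mul _ _) ?_
  simp [MvPolynomial.totalDegree_C, MvPolynomial.totalDegree_X]

lemma totalDegree_one_add_linPoly {m : ℕ} (u : Fin m → ZMod 2) :
    (1 + linPoly u).totalDegree ≤ 1 := by
  refine le_trans (MvPolynomial.totalDegree_add _ _) ?_
  simp only [MvPolynomial.totalDegree_one, sup_le_iff]
  exact ⟨Nat.zero_le _, totalDegree_linPoly u⟩

def FT {m : ℕ} (f : (Fin m → ZMod 2) → ZMod 2) (u : Fin m → ZMod 2) : ℤ :=
  ∑ x : Fin m → ZMod 2, ((f x).val : ℤ) * sgn (dotp u x)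

lemma wt_eq_sum {m : ℕ} (f : (Fin m → ZMod 2) → ZMod 2) :
    wt f = ∑ x : Fin m → ZMod 2, (f x).val := by
  rw [wt, Fintype.card_subtype, Finset.card_eq_sum_ones]
  rw [Finset.sum_filter]
  apply Finset.sum_congr rfl
  intro x _
  rcases (by decide : ∀ c : ZMod 2, (c ≠ 0 → c.val = 1) ∧ (¬ c ≠ 0 → c.val = 0)) (f x)
    with ⟨h1, h2⟩
  by_cases h : f x ≠ 0 <;> simp [h, h1, h2]

lemma zmod2_val_cast (c : ZMod 2) : (((c.val : ℤ)) : ZMod 2) = c := by revert c; decide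

lemma key8 {m : ℕ} (hm : 3 ≤ m) {f : (Fin m → ZMod 2) → ZMod 2}
    (hf : f ∈ RM (m - 3) m) (u v : Fin m → ZMod 2) :
    (8 : ℤ) ∣ FT f 0 + FT f u + FT f v + FT f (u + v) := by
  have expand : FT f 0 + FT f u + FT f v + FT f (u + v)
      = ∑ x : Fin m → ZMod 2, (((f x).val : ℤ) * sgn (dotp 0 x)
        + ((f x).val : ℤ) * sgn (dotp u x) + ((f x).val : ℤ) * sgn (dotp v x)
        + ((f x).val : ℤ) * sgn (dotp (u + v) x)) := by
    simp [FT, Finset.sum_add_distrib]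
  set N : ℤ := ∑ x : Fin m → ZMod 2, ((f x).val : ℤ)
    * (if dotp u x = 0 then 1 else 0) * (if dotp v x = 0 then 1 else 0) with hN
  have per : ∀ x : Fin m → ZMod 2, (((f x).val : ℤ) * sgn (dotp 0 x)
        + ((f x).val : ℤ) * sgn (dotp u x) + ((f x).val : ℤ) * sgn (dotp v x)
        + ((f x).val : ℤ) * sgn (dotp (u + v) x))
      = 4 * (((f x).val : ℤ) * (if dotp u x = 0 then 1 else 0)
          * (if dotp v x = 0 then 1 else 0)) := by
    intro x
    rw [dotp_zero_left, dotp_add_left]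
    exact (by decide : ∀ (c a b : ZMod 2), ((c.val : ℤ) * sgn 0
      + (c.val : ℤ) * sgn a + (c.val : ℤ) * sgn b + (c.val : ℤ) * sgn (a + b))
      = 4 * ((c.val : ℤ) * (if a = 0 then 1 else 0) * (if b = 0 then 1 else 0)))
      (f x) (dotp u x) (dotp v x)
  have hexp : FT f 0 + FT f u + FT f v + FT f (u + v) = 4 * N := by
    rw [expand]
    simp only [per]
    rw [hN, Finset.mul_sum]
  have hNdvd : (2 : ℤ) ∣ N := by
    have hcast : ((N : ℤ) : ZMod 2)
        = ∑ x : Fin m → ZMod 2, f x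
            * eval x ((1 + linPoly u) * (1 + linPoly v)) := by
      rw [hN]
      push_cast
      apply Finset.sum_congr rfl
      intro x _
      rw [map_mul, map_add, map_add, map_one, eval_linPoly, eval_linPoly]
      rw [(by decide : ∀ c : ZMod 2, ((c.val : ℕ) : ZMod 2) = c) (f x)]
      exact (by decide : ∀ (c a b : ZMod 2),
        c * (if a = 0 then (1 : ZMod 2) else 0) * (if b = 0 then (1:ZMod 2) else 0)
        = c * ((1 + a) * (1 + b))) (f x) (dotp u x) (dotp v x)
    have hq : ((1 + linPoly u) * (1 + linPoly v)).totalDegree ≤ 2 := by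
      refine le_trans (MvPolynomial.totalDegree_mul _ _) ?_
      have := totalDegree_one_add_linPoly u
      have := totalDegree_one_add_linPoly v
      omega
    rw [inner_eval_zero hm hf hq] at hcast
    exact_mod_cast (ZMod.intCast_zmod_eq_zero_iff_dvd N 2).mp hcast
  rw [hexp]
  omega

lemma vec_add_eq_zero {m : ℕ} (x y : Fin m → ZMod 2) : x + y = 0 ↔ y = x := by
  constructor
  · intro h
    funext i
    have := congrFun h i
    exact (by decide : ∀ a b : ZMod 2, a + b = 0 → b = a) _ _ this
  · intro h
    subst h
    funext i
    exact (by decide : ∀ a : ZMod 2, a + a = 0) _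

lemma FT_zero {m : ℕ} (f : (Fin m → ZMod 2) → ZMod 2) : FT f 0 = (wt f : ℤ) := by
  rw [FT, wt_eq_sum]
  push_cast
  apply Finset.sum_congr rfl
  intro x _
  rw [dotp_zero_left, sgn_zero, mul_one]

lemma FT_abs_le {m : ℕ} (f : (Fin m → ZMod 2) → ZMod 2) (u : Fin m → ZMod 2) :
    |FT f u| ≤ (wt f : ℤ) := by
  refine le_trans (Finset.abs_sum_le_sum_abs _ _) ?_
  rw [wt_eq_sum]
  push_cast
  apply Finset.sum_le_sum
  intro x _
  rw [(by decide : ∀ (c a : ZMod 2), |(c.val : ℤ) * sgn a| = (c.val : ℤ)) (f x) (dotp u x)]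

lemma wt_even {m : ℕ} (hm : 3 ≤ m) {f : (Fin m → ZMod 2) → ZMod 2}
    (hf : f ∈ RM (m - 3) m) : 2 ∣ wt f := by
  have h1 : ∑ x : Fin m → ZMod 2, f x * eval x (1 : MvPolynomial (Fin m) (ZMod 2)) = 0 :=
    inner_eval_zero hm hf (by simp [MvPolynomial.totalDegree_one])
  simp only [map_one, mul_one] at h1
  have h2 : ((wt f : ℕ) : ZMod 2) = 0 := by
    rw [wt_eq_sum]
    push_cast
    rw [show ∑ x : Fin m → ZMod 2, (((f x).val : ℕ) : ZMod 2) = ∑ x : Fin m → ZMod 2, f x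
      from Finset.sum_congr rfl fun x _ => (by decide : ∀ c : ZMod 2, ((c.val : ℕ) : ZMod 2) = c) (f x)]
    exact h1
  exact (ZMod.natCast_eq_zero_iff _ 2).mp h2

lemma moment1 {m : ℕ} (f : (Fin m → ZMod 2) → ZMod 2) (w : Fin m → ZMod 2) :
    ∑ u : Fin m → ZMod 2, sgn (dotp u w) * FT f u = 2 ^ m * (((f w).val : ℤ)) := by
  have per : ∀ u : Fin m → ZMod 2, sgn (dotp u w) * FT f u
      = ∑ x : Fin m → ZMod 2, ((f x).val : ℤ) * sgn (dotp u (w + x)) := by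
    intro u
    rw [FT, Finset.mul_sum]
    apply Finset.sum_congr rfl
    intro x _
    rw [dotp_add_right, sgn_add]
    ring
  simp only [per]
  rw [Finset.sum_comm]
  have inner : ∀ x : Fin m → ZMod 2,
      ∑ u : Fin m → ZMod 2, ((f x).val : ℤ) * sgn (dotp u (w + x))
      = if x = w then ((f x).val : ℤ) * 2 ^ m else 0 := by
    intro x
    rw [← Finset.mul_sum, sum_sgn_dotp]
    rw [if_congr (vec_add_eq_zero w x) rfl rfl]
    by_cases h : x = w <;> simp [h]
  simp only [inner]
  rw [Finset.sum_ite_eq' Finset.univ w (fun x => ((f x).val : ℤ) * 2 ^ m)]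
  simp [mul_comm]

lemma moment2 {m : ℕ} (f : (Fin m → ZMod 2) → ZMod 2) (w : Fin m → ZMod 2) :
    ∑ u : Fin m → ZMod 2, (sgn (dotp u w) * FT f u) ^ 2 = 2 ^ m * (wt f : ℤ) := by
  have per : ∀ u : Fin m → ZMod 2, (sgn (dotp u w) * FT f u) ^ 2
      = ∑ x : Fin m → ZMod 2, ∑ y : Fin m → ZMod 2,
          ((f x).val : ℤ) * ((f y).val : ℤ) * sgn (dotp u (x + y)) := by
    intro u
    rw [mul_pow, (by decide : ∀ a : ZMod 2, sgn a ^ 2 = 1) (dotp u w), one_mul, sq, FT,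
      Finset.sum_mul_sum]
    apply Finset.sum_congr rfl; intro x _
    apply Finset.sum_congr rfl; intro y _
    rw [dotp_add_right, sgn_add]
    ring
  simp only [per]
  rw [Finset.sum_comm]
  have inner1 : ∀ x : Fin m → ZMod 2,
      (∑ u : Fin m → ZMod 2, ∑ y : Fin m → ZMod 2,
        ((f x).val : ℤ) * ((f y).val : ℤ) * sgn (dotp u (x + y)))
      = ((f x).val : ℤ) * 2 ^ m := by
    intro x
    rw [Finset.sum_comm]
    have inner2 : ∀ y : Fin m → ZMod 2,
        (∑ u : Fin m → ZMod 2, ((f x).val : ℤ) * ((f y).val : ℤ) * sgn (dotp u (x + y)))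
        = if y = x then ((f x).val : ℤ) * ((f y).val : ℤ) * 2 ^ m else 0 := by
      intro y
      rw [← Finset.mul_sum, sum_sgn_dotp, if_congr (vec_add_eq_zero x y) rfl rfl]
      by_cases h : y = x <;> simp [h]
    simp only [inner2]
    rw [Finset.sum_ite_eq' Finset.univ x
      (fun y => ((f x).val : ℤ) * ((f y).val : ℤ) * 2 ^ m)]
    simp only [Finset.mem_univ, if_true]
    rw [(by decide : ∀ c : ZMod 2, ((c.val : ℤ)) * ((c.val : ℤ)) = (c.val : ℤ)) (f x)]
  simp only [inner1]
  rw [← Finset.sum_mul, wt_eq_sum]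
  push_cast
  ring

lemma moment3 {m : ℕ} (f : (Fin m → ZMod 2) → ZMod 2) (w : Fin m → ZMod 2) :
    0 ≤ ∑ u : Fin m → ZMod 2, (sgn (dotp u w) * FT f u) ^ 3 := by
  have per : ∀ u : Fin m → ZMod 2, (sgn (dotp u w) * FT f u) ^ 3
      = ∑ x : Fin m → ZMod 2, ∑ y : Fin m → ZMod 2, ∑ z : Fin m → ZMod 2,
          ((f x).val : ℤ) * ((f y).val : ℤ) * ((f z).val : ℤ)
            * sgn (dotp u (w + x + y + z)) := by
    intro u
    rw [mul_pow, (by decide : ∀ a : ZMod 2, sgn a ^ 3 = sgn a) (dotp u w),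
      show FT f u ^ 3 = FT f u * FT f u * FT f u by ring, FT]
    simp only [Finset.sum_mul, Finset.mul_sum]
    apply Finset.sum_congr rfl; intro x _
    apply Finset.sum_congr rfl; intro y _
    apply Finset.sum_congr rfl; intro z _
    rw [show w + x + y + z = w + (x + (y + z)) by ring, dotp_add_right, dotp_add_right,
      dotp_add_right, sgn_add, sgn_add, sgn_add]
    ring
  simp only [per]
  rw [Finset.sum_comm]
  apply Finset.sum_nonneg
  intro x _
  rw [Finset.sum_comm]
  apply Finset.sum_nonneg
  intro y _
  rw [Finset.sum_comm]
  apply Finset.sum_nonneg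
  intro z _
  rw [← Finset.mul_sum, sum_sgn_dotp]
  have hval : ∀ c : ZMod 2, (0 : ℤ) ≤ (c.val : ℤ) := fun c => Int.natCast_nonneg _
  by_cases h : w + x + y + z = 0
  · rw [if_pos h]
    have : (0:ℤ) ≤ (2:ℤ) ^ m := by positivity
    exact mul_nonneg (mul_nonneg (mul_nonneg (hval _) (hval _)) (hval _)) this
  · rw [if_neg h, mul_zero]

lemma exists_w {m : ℕ} (hm : 3 ≤ m) {f : (Fin m → ZMod 2) → ZMod 2}
    (hf : f ∈ RM (m - 3) m) :
    ∃ w : Fin m → ZMod 2, ∀ u,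
      (if (8:ℤ) ∣ FT f u - FT f 0 then (0 : ZMod 2) else 1) = dotp u w := by
  set g : (Fin m → ZMod 2) → ZMod 2 :=
    fun u => if (8:ℤ) ∣ FT f u - FT f 0 then (0 : ZMod 2) else 1 with hg
  have hF0 : (2:ℤ) ∣ FT f 0 := by
    rw [FT_zero]
    exact_mod_cast Int.natCast_dvd_natCast.mpr (wt_even hm hf)
  have d4 : ∀ u, (4:ℤ) ∣ FT f u - FT f 0 := by
    intro u
    have h := key8 hm hf u 0
    rw [add_zero] at h
    omega
  have g_add : ∀ u v, g (u + v) = g u + g v := by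
    intro u v
    have h8 := key8 hm hf u v
    have h4u := d4 u
    have h4v := d4 v
    have h4w := d4 (u + v)
    by_cases hu : (8:ℤ) ∣ FT f u - FT f 0 <;>
      by_cases hv : (8:ℤ) ∣ FT f v - FT f 0
    · have hw : (8:ℤ) ∣ FT f (u + v) - FT f 0 := by omega
      simp [hg, hu, hv, hw]
    · have hw : ¬ (8:ℤ) ∣ FT f (u + v) - FT f 0 := by omega
      simp [hg, hu, hv, hw]
    · have hw : ¬ (8:ℤ) ∣ FT f (u + v) - FT f 0 := by omega
      simp [hg, hu, hv, hw]
    · have hw : (8:ℤ) ∣ FT f (u + v) - FT f 0 := by omega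
      simp [hg, hu, hv, hw]
      decide
  have g0 : g 0 = 0 := by simp [hg]
  set sing : Fin m → (Fin m → ZMod 2) := fun i => (fun j => if j = i then 1 else 0)
    with hsing
  have gsum : ∀ (s : Finset (Fin m)) (u : Fin m → ZMod 2), (∀ i ∉ s, u i = 0) →
      g u = ∑ i ∈ s, u i * g (sing i) := by
    intro s
    induction s using Finset.cons_induction with
    | empty =>
      intro u hu
      have : u = 0 := funext fun i => hu i (Finset.notMem_empty i)
      rw [this, g0, Finset.sum_empty]
    | cons i s hi ih =>
      intro u hu
      have hu' : u = Function.update u i 0 + fun j => if j = i then u i else 0 := by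
        funext j
        by_cases hj : j = i
        · subst hj; simp
        · simp [Function.update_of_ne hj, hj]
      have h1 : g (Function.update u i 0) = ∑ j ∈ s, u j * g (sing j) := by
        rw [ih _ (fun j hj => by
          by_cases hji : j = i
          · subst hji; simp
          · rw [Function.update_of_ne hji]
            exact hu j (by simp [hji, hj]))]
        apply Finset.sum_congr rfl
        intro j hj
        rw [Function.update_of_ne (fun hji => hi (by rw [← hji]; exact hj))]
      have h2 : g (fun j => if j = i then u i else 0) = u i * g (sing i) := by
        rcases (by decide : ∀ c : ZMod 2, c = 0 ∨ c = 1) (u i) with hc | hc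
        · have h0 : (fun j => if j = i then u i else 0) = (0 : Fin m → ZMod 2) := by
            funext j; rw [hc]; simp
          rw [h0, g0, hc, zero_mul]
        · rw [hc, one_mul]
      conv_lhs => rw [hu']
      rw [g_add, h1, h2, Finset.sum_cons]
      ring
  refine ⟨fun i => g (sing i), fun u => ?_⟩
  show g u = dotp u _
  rw [gsum Finset.univ u (fun i hi => absurd (Finset.mem_univ i) hi), dotp]

lemma wt_not_small {m : ℕ} (hm : 6 ≤ m) {f : (Fin m → ZMod 2) → ZMod 2}
    (hf : f ∈ RM (m - 3) m)
    (hs : wt f = 2 ∨ wt f = 4 ∨ wt f = 6 ∨ wt f = 10) : False := by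
  have hm3 : 3 ≤ m := by omega
  obtain ⟨w, hw⟩ := exists_w hm3 hf
  set a : (Fin m → ZMod 2) → ℤ := fun u => sgn (dotp u w) * FT f u with ha
  set n : ℤ := 2 ^ m with hn
  have hn0 : 0 < n := by positivity
  have hcard : ((Finset.univ : Finset (Fin m → ZMod 2)).card : ℤ) = n := by
    rw [Finset.card_univ, Fintype.card_fun, ZMod.card 2, Fintype.card_fin, hn]
    push_cast; ring
  have hdvd_iff : ∀ u, (dotp u w = 0 ↔ (8:ℤ) ∣ FT f u - FT f 0) := by
    intro u
    by_cases hd : (8:ℤ) ∣ FT f u - FT f 0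
    · have := hw u
      rw [if_pos hd] at this
      exact ⟨fun _ => hd, fun _ => this.symm⟩
    · have := hw u
      rw [if_neg hd] at this
      constructor
      · intro h0; rw [h0] at this; exact absurd this (by decide)
      · intro h; exact absurd h hd
  have hdot_val : ∀ u, dotp u w = 0 ∨ dotp u w = 1 :=
    fun u => (by decide : ∀ c : ZMod 2, c = 0 ∨ c = 1) (dotp u w)
  have hd4 : ∀ u, (4:ℤ) ∣ FT f u - FT f 0 := by
    intro u
    have h := key8 hm3 hf u 0
    rw [add_zero] at h
    have h2 : (2:ℤ) ∣ FT f 0 := by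
      rw [FT_zero]
      exact_mod_cast Int.natCast_dvd_natCast.mpr (wt_even hm3 hf)
    omega
  have hclass0 : ∀ u, dotp u w = 0 → a u = FT f u ∧ (8:ℤ) ∣ FT f u - FT f 0 := by
    intro u h0
    refine ⟨?_, (hdvd_iff u).mp h0⟩
    rw [ha]; simp only [h0, sgn_zero, one_mul]
  have hclass1 : ∀ u, dotp u w = 1 →
      a u = -FT f u ∧ ¬ (8:ℤ) ∣ FT f u - FT f 0 := by
    intro u h1
    constructor
    · rw [ha]; simp only [h1]
      rw [(by decide : sgn 1 = -1)]; ring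
    · intro hd
      have := (hdvd_iff u).mpr hd
      rw [this] at h1
      exact absurd h1 (by decide)
  have habs : ∀ u, |a u| ≤ (wt f : ℤ) := by
    intro u
    rw [ha]
    simp only [abs_mul]
    rw [(by decide : ∀ c : ZMod 2, |sgn c| = 1) (dotp u w), one_mul]
    exact FT_abs_le f u
  have hM1 : (∑ u, a u = 0) ∨ (∑ u, a u = n) := by
    have := moment1 f w
    rcases (by decide : ∀ c : ZMod 2, ((c.val : ℤ)) = 0 ∨ ((c.val : ℤ)) = 1) (f w)
      with h | h
    · left; rw [ha]; rw [h, mul_zero] at this; exact this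
    · right; rw [ha]; rw [h, mul_one] at this; rw [this, hn]
  have hM2 : ∑ u, (a u) ^ 2 = n * (wt f : ℤ) := moment2 f w
  have hM3 : 0 ≤ ∑ u, (a u) ^ 3 := moment3 f w
  -- sum expander
  have expand : ∀ c₃ c₂ c₁ c₀ : ℤ, (∀ u, c₃ * a u ^ 3 + c₂ * a u ^ 2 + c₁ * a u + c₀ = 0) →
      c₃ * (∑ u, (a u) ^ 3) + c₂ * (∑ u, (a u) ^ 2) + c₁ * (∑ u, a u) + c₀ * n = 0 := by
    intro c3 c2 c1 c0 hper
    have : (0:ℤ) = ∑ u : Fin m → ZMod 2, (c3 * a u ^ 3 + c2 * a u ^ 2 + c1 * a u + c0) := by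
      rw [Finset.sum_eq_zero fun u _ => hper u]
    rw [Finset.sum_add_distrib, Finset.sum_add_distrib, Finset.sum_add_distrib,
      ← Finset.mul_sum, ← Finset.mul_sum, ← Finset.mul_sum, Finset.sum_const,
      nsmul_eq_mul, mul_comm ((Finset.univ : Finset (Fin m → ZMod 2)).card : ℤ) c0,
      hcard] at this
    omega
  rcases hs with h | h | h | h
  -- case wt = 2
  · have hF0 : FT f 0 = 2 := by rw [FT_zero, h]; norm_num
    have hval : ∀ u, a u = 2 := by
      intro u
      have hb := abs_le.mp (habs u)
      rw [h] at hb
      rcases hdot_val u with h0 | h1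
      · obtain ⟨he, hd⟩ := hclass0 u h0
        rw [hF0] at hd; push_cast at hb; omega
      · obtain ⟨he, hd⟩ := hclass1 u h1
        have h4 := hd4 u
        rw [hF0] at hd h4; push_cast at hb; omega
    have := expand 0 0 1 (-2) (by intro u; rw [hval u]; ring)
    rcases hM1 with h1 | h1 <;> rw [h1] at this <;> linarith
  -- case wt = 4
  · have hF0 : FT f 0 = 4 := by rw [FT_zero, h]; norm_num
    have hval : ∀ u, a u ^ 2 = 8 + 8 * sgn (dotp u w) := by
      intro u
      have hb := abs_le.mp (habs u)
      rw [h] at hb; push_cast at hb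
      rcases hdot_val u with h0 | h1
      · obtain ⟨he, hd⟩ := hclass0 u h0
        rw [hF0] at hd
        rw [h0, sgn_zero]
        have : a u = 4 ∨ a u = -4 := by omega
        rcases this with h' | h' <;> rw [h'] <;> ring
      · obtain ⟨he, hd⟩ := hclass1 u h1
        have h4 := hd4 u
        rw [hF0] at hd h4
        rw [h1, (by decide : sgn 1 = -1)]
        have : a u = 0 := by omega
        rw [this]; ring
    have hsum : ∑ u, (a u) ^ 2
        = 8 * n + 8 * ∑ u : Fin m → ZMod 2, sgn (dotp u w) := by
      rw [Finset.sum_congr rfl fun u _ => hval u, Finset.sum_add_distrib,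
        Finset.sum_const, ← Finset.mul_sum, nsmul_eq_mul, hcard]
      ring
    rw [sum_sgn_dotp w, hM2, h] at hsum
    by_cases hw0 : w = 0
    · rw [if_pos hw0] at hsum; rw [← hn] at hsum; push_cast at hsum; linarith
    · rw [if_neg hw0] at hsum; push_cast at hsum; linarith
  -- case wt = 6
  · have hF0 : FT f 0 = 6 := by rw [FT_zero, h]; norm_num
    have hval : ∀ u, a u = 6 ∨ a u = -2 := by
      intro u
      have hb := abs_le.mp (habs u)
      rw [h] at hb; push_cast at hb
      rcases hdot_val u with h0 | h1
      · obtain ⟨he, hd⟩ := hclass0 u h0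
        rw [hF0] at hd; omega
      · obtain ⟨he, hd⟩ := hclass1 u h1
        have h4 := hd4 u
        rw [hF0] at hd h4; omega
    have := expand 0 1 (-4) (-12) (by
      intro u
      rcases hval u with h' | h' <;> rw [h'] <;> ring)
    rw [hM2, h] at this
    push_cast at this
    rcases hM1 with h1 | h1 <;> rw [h1] at this <;> linarith
  -- case wt = 10
  · have hF0 : FT f 0 = 10 := by rw [FT_zero, h]; norm_num
    have hval : ∀ u, a u = 10 ∨ a u = 2 ∨ a u = -6 := by
      intro u
      have hb := abs_le.mp (habs u)
      rw [h] at hb; push_cast at hb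
      rcases hdot_val u with h0 | h1
      · obtain ⟨he, hd⟩ := hclass0 u h0
        rw [hF0] at hd; omega
      · obtain ⟨he, hd⟩ := hclass1 u h1
        have h4 := hd4 u
        rw [hF0] at hd h4; omega
    have := expand 1 (-6) (-52) 120 (by
      intro u
      rcases hval u with h' | h' | h' <;> rw [h'] <;> ring)
    rw [hM2, h] at this
    push_cast at this
    rcases hM1 with h1 | h1 <;> rw [h1] at this <;> linarith


lemma compl_mem {r m : ℕ} {f : (Fin m → ZMod 2) → ZMod 2} (hf : f ∈ RM r m) :
    (fun x => 1 + f x) ∈ RM r m := by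
  obtain ⟨p, hp, hpe⟩ := hf
  refine ⟨1 + p, ?_, ?_⟩
  · refine le_trans (MvPolynomial.totalDegree_add _ _) ?_
    simp only [MvPolynomial.totalDegree_one, sup_le_iff]
    exact ⟨Nat.zero_le _, hp⟩
  · intro x; rw [map_add, map_one, hpe]

lemma wt_le_card {m : ℕ} (f : (Fin m → ZMod 2) → ZMod 2) : wt f ≤ 2 ^ m := by
  have := Fintype.card_subtype_le (fun x : Fin m → ZMod 2 => f x ≠ 0)
  rwa [Fintype.card_fun, ZMod.card 2, Fintype.card_fin] at this

lemma wt_compl {m : ℕ} (f : (Fin m → ZMod 2) → ZMod 2) :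
    wt (fun x => 1 + f x) = 2 ^ m - wt f := by
  have h1 : wt (fun x => 1 + f x) = Fintype.card {x : Fin m → ZMod 2 // ¬ f x ≠ 0} := by
    rw [wt]
    exact Fintype.card_congr (Equiv.subtypeEquivRight (fun x => by
      constructor
      · intro h
        exact (by decide : ∀ c : ZMod 2, 1 + c ≠ 0 → ¬ c ≠ 0) (f x) h
      · intro h
        exact (by decide : ∀ c : ZMod 2, ¬ c ≠ 0 → 1 + c ≠ 0) (f x) h))
  rw [h1, Fintype.card_subtype_compl, Fintype.card_fun, ZMod.card 2, Fintype.card_fin]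
  rfl

lemma spec_compl {r m w : ℕ} (hw : w ∈ spec r m) : 2 ^ m - w ∈ spec r m := by
  obtain ⟨f, hf, hwf⟩ := hw
  exact ⟨fun x => 1 + f x, compl_mem hf, by rw [wt_compl, hwf]⟩

lemma spec_subset_rhs {m : ℕ} (hm : 6 ≤ m) :
    spec (m - 3) m ⊆
      ({0, 8} : Set ℕ) ∪ {w | Even w ∧ 12 ≤ w ∧ w ≤ 2 ^ m - 12} ∪ {2 ^ m - 8, 2 ^ m} := by
  have hm3 : 3 ≤ m := by omega
  rintro w ⟨f, hf, rfl⟩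
  have heven : 2 ∣ wt f := wt_even hm3 hf
  have hle : wt f ≤ 2 ^ m := wt_le_card f
  have hne : ¬ (wt f = 2 ∨ wt f = 4 ∨ wt f = 6 ∨ wt f = 10) := fun h =>
    wt_not_small hm hf h
  have hfc : (fun x => 1 + f x) ∈ RM (m - 3) m := compl_mem hf
  have hnec : ¬ (2 ^ m - wt f = 2 ∨ 2 ^ m - wt f = 4 ∨ 2 ^ m - wt f = 6
      ∨ 2 ^ m - wt f = 10) := by
    intro h
    exact wt_not_small hm hfc (by rw [wt_compl]; exact h)
  have hN : 64 ≤ 2 ^ m ∧ 2 ∣ 2 ^ m := by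
    constructor
    · calc (64:ℕ) = 2 ^ 6 := by norm_num
      _ ≤ 2 ^ m := Nat.pow_le_pow_right (by norm_num) hm
    · exact Dvd.intro (2 ^ (m - 1)) (by rw [← pow_succ']; congr 1; omega)
  simp only [Set.mem_union, Set.mem_insert_iff, Set.mem_singleton_iff, Set.mem_setOf_eq,
    Nat.even_iff]
  obtain ⟨h64, h2N⟩ := hN
  omega

lemma listFun_mem_RM {r m : ℕ} (L : List (List (Fin m))) (h : ∀ l ∈ L, l.length ≤ r) :
    (fun x => (L.map (fun l => (l.map x).prod)).sum) ∈ RM r m := by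
  refine ⟨(L.map (fun l => (l.map X).prod)).sum, ?_, ?_⟩
  · induction L with
    | nil => simp
    | cons l L ih =>
      simp only [List.map_cons, List.sum_cons]
      refine le_trans (MvPolynomial.totalDegree_add _ _) ?_
      rw [sup_le_iff]
      constructor
      · refine le_trans ?_ (h l List.mem_cons_self)
        clear h ih
        induction l with
        | nil => simp
        | cons i l ihl =>
          simp only [List.map_cons, List.prod_cons, List.length_cons]
          refine le_trans (MvPolynomial.totalDegree_mul _ _) ?_
          have : (X i : MvPolynomial (Fin m) (ZMod 2)).totalDegree ≤ 1 :=
            le_of_eq (MvPolynomial.totalDegree_X i)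
          omega
      · exact ih (fun l' hl' => h l' (List.mem_cons_of_mem l hl'))
  · intro x
    rw [map_list_sum, List.map_map]
    congr 1
    apply List.map_congr_left
    intro l _
    simp only [Function.comp_apply]
    rw [map_list_prod, List.map_map]
    congr 1
    apply List.map_congr_left
    intro i _
    simp

lemma mem_spec_list (r m w : ℕ) (L : List (List (Fin m))) (hlen : ∀ l ∈ L, l.length ≤ r)
    (hw : wt (fun x => (L.map (fun l => (l.map x).prod)).sum) = w) : w ∈ spec r m :=
  ⟨_, listFun_mem_RM L hlen, hw⟩

lemma spec_add {r m a b : ℕ} (ha : a ∈ spec r m) (hb : b ∈ spec r m) :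
    a + b ∈ spec (r + 1) (m + 1) := by
  obtain ⟨f, ⟨p, hp, hpe⟩, hwf⟩ := ha
  obtain ⟨g, ⟨q, hq, hqe⟩, hwg⟩ := hb
  set F : (Fin (m + 1) → ZMod 2) → ZMod 2 :=
    fun x => (1 + x 0) * f (x ∘ Fin.succ) + x 0 * g (x ∘ Fin.succ) with hF
  refine ⟨F, ?_, ?_⟩
  · refine ⟨(1 + X 0) * rename Fin.succ p + X 0 * rename Fin.succ q, ?_, ?_⟩
    · refine le_trans (MvPolynomial.totalDegree_add _ _) ?_
      rw [sup_le_iff]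
      have h1 : (1 + X 0 : MvPolynomial (Fin (m+1)) (ZMod 2)).totalDegree ≤ 1 := by
        refine le_trans (MvPolynomial.totalDegree_add _ _) ?_
        simp [MvPolynomial.totalDegree_one, MvPolynomial.totalDegree_X]
      have h2 := MvPolynomial.totalDegree_rename_le Fin.succ p
      have h3 := MvPolynomial.totalDegree_rename_le Fin.succ q
      have h4 := MvPolynomial.totalDegree_mul (1 + X 0) (rename Fin.succ p)
      have h5 := MvPolynomial.totalDegree_mul (X 0 : MvPolynomial (Fin (m+1)) (ZMod 2))
        (rename Fin.succ q)
      have h6 : (X 0 : MvPolynomial (Fin (m+1)) (ZMod 2)).totalDegree = 1 :=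
        MvPolynomial.totalDegree_X 0
      omega
    · intro x
      rw [map_add, map_mul, map_mul, map_add, map_one, MvPolynomial.eval_rename,
        MvPolynomial.eval_rename, MvPolynomial.eval_X, hpe, hqe]
  · rw [← hwf, ← hwg]
    have hsplit : wt F = Fintype.card {y : Fin m → ZMod 2 // f y ≠ 0}
        + Fintype.card {y : Fin m → ZMod 2 // g y ≠ 0} := by
      rw [wt]
      have e1 : {x : Fin (m+1) → ZMod 2 // F x ≠ 0}
          ≃ {p : ZMod 2 × (Fin m → ZMod 2) // F (Fin.cons p.1 p.2) ≠ 0} :=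
        ((Fin.consEquiv (fun _ : Fin (m+1) => ZMod 2)).subtypeEquiv (fun p => Iff.rfl)).symm
      rw [Fintype.card_congr e1]
      have e2 : {p : ZMod 2 × (Fin m → ZMod 2) // F (Fin.cons p.1 p.2) ≠ 0}
          ≃ Σ b : ZMod 2, {y : Fin m → ZMod 2 // F (Fin.cons b y) ≠ 0} :=
        Equiv.subtypeProdEquivSigmaSubtype
          (fun (b : ZMod 2) (y : Fin m → ZMod 2) => F (Fin.cons b y) ≠ 0)
      rw [Fintype.card_congr e2, Fintype.card_sigma, sum_zmod2]
      congr 1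
      · apply Fintype.card_congr
        apply Equiv.subtypeEquivRight
        intro y
        have : F (Fin.cons 0 y) = f y := by
          rw [hF]
          simp only [Fin.cons_zero]
          rw [show (Fin.cons (0:ZMod 2) y ∘ Fin.succ) = y from funext fun i => Fin.cons_succ _ _ _]
          rw [(by decide : (1 : ZMod 2) + 0 = 1), one_mul, zero_mul, add_zero]
        rw [this]
      · apply Fintype.card_congr
        apply Equiv.subtypeEquivRight
        intro y
        have : F (Fin.cons 1 y) = g y := by
          rw [hF]
          simp only [Fin.cons_zero]
          rw [show (Fin.cons (1:ZMod 2) y ∘ Fin.succ) = y from funext fun i => Fin.cons_succ _ _ _]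
          rw [(by decide : (1 : ZMod 2) + 1 = 0), zero_mul, one_mul, zero_add]
        rw [this]
    rw [hsplit, wt, wt]

lemma base6_small (v : ℕ) (hv : v = 0 ∨ v = 8 ∨ v = 12 ∨ v = 14 ∨ v = 16 ∨ v = 18
    ∨ v = 20 ∨ v = 22 ∨ v = 24 ∨ v = 26 ∨ v = 28 ∨ v = 30 ∨ v = 32) :
    v ∈ spec 3 6 := by
  rcases hv with rfl|rfl|rfl|rfl|rfl|rfl|rfl|rfl|rfl|rfl|rfl|rfl|rfl
  · exact mem_spec_list 3 6 _ [] (by decide) (by decide)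
  · exact mem_spec_list 3 6 _ [[0,1,2]] (by decide) (by decide)
  · exact mem_spec_list 3 6 _ [[0,1,2],[0,3,4]] (by decide) (by decide)
  · exact mem_spec_list 3 6 _ [[0,1,2],[3,4,5]] (by decide) (by decide)
  · exact mem_spec_list 3 6 _ [[0,1]] (by decide) (by decide)
  · exact mem_spec_list 3 6 _ [[0,1],[0,2,3],[1,4,5]] (by decide) (by decide)
  · exact mem_spec_list 3 6 _ [[0,1],[2,3,4]] (by decide) (by decide)
  · exact mem_spec_list 3 6 _ [[0],[0,1],[0,2,3],[1,4,5]] (by decide) (by decide)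
  · exact mem_spec_list 3 6 _ [[0],[0,1,2]] (by decide) (by decide)
  · exact mem_spec_list 3 6 _ [[0],[0,1,2],[3,4,5]] (by decide) (by decide)
  · exact mem_spec_list 3 6 _ [[0],[1,2],[0,3,4]] (by decide) (by decide)
  · exact mem_spec_list 3 6 _ [[0],[1],[0,2,3],[1,4,5]] (by decide) (by decide)
  · exact mem_spec_list 3 6 _ [[0]] (by decide) (by decide)

lemma base6 (w : ℕ) (hw : w = 0 ∨ w = 8 ∨ (w % 2 = 0 ∧ 12 ≤ w ∧ w ≤ 52) ∨ w = 56 ∨ w = 64) :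
    w ∈ spec 3 6 := by
  by_cases hle : w ≤ 32
  · exact base6_small w (by omega)
  · have h1 : w = 2 ^ 6 - (64 - w) := by norm_num; omega
    rw [h1]
    exact spec_compl (base6_small (64 - w) (by omega))

lemma rhs_mem_spec : ∀ m, 6 ≤ m → ∀ w,
    (w = 0 ∨ w = 8 ∨ (w % 2 = 0 ∧ 12 ≤ w ∧ w ≤ 2 ^ m - 12) ∨ w = 2 ^ m - 8 ∨ w = 2 ^ m)
    → w ∈ spec (m - 3) m := by
  intro m hm
  induction m, hm using Nat.le_induction with
  | base =>
    intro w hw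
    have h64 : (2:ℕ) ^ 6 = 64 := by norm_num
    exact base6 w (by omega)
  | succ m hm ih =>
    intro w hw
    have hN1 : (64:ℕ) ≤ 2 ^ m := by
      calc (64:ℕ) = 2 ^ 6 := by norm_num
      _ ≤ 2 ^ m := Nat.pow_le_pow_right (by norm_num) hm
    have h2d : 2 ∣ 2 ^ m := Dvd.intro (2 ^ (m - 1)) (by rw [← pow_succ']; congr 1; omega)
    have hN2 : 2 ^ (m + 1) = 2 ^ m + 2 ^ m := by rw [pow_succ]; ring
    have hadd : ∀ a b : ℕ, a ∈ spec (m - 3) m → b ∈ spec (m - 3) m →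
        a + b ∈ spec (m + 1 - 3) (m + 1) := by
      intro a b ha hb
      have := spec_add ha hb
      rwa [show m - 3 + 1 = m + 1 - 3 by omega] at this
    obtain ⟨n, hn⟩ : ∃ n, 2 ^ m = n := ⟨_, rfl⟩
    rw [hN2, hn] at hw
    rw [hn] at hN1 h2d
    rcases hw with rfl | rfl | ⟨he, h12, hle⟩ | rfl | rfl
    · exact hadd 0 0 (ih 0 (by omega)) (ih 0 (by omega))
    · have : (8:ℕ) = 8 + 0 := by omega
      rw [this]
      exact hadd 8 0 (ih 8 (by omega)) (ih 0 (by omega))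
    · by_cases hc1 : w ≤ n - 12
      · have : w = w + 0 := by omega
        rw [this]
        exact hadd w 0 (ih w (by omega)) (ih 0 (by omega))
      · by_cases hc2 : w < n + 12
        · have : w = (w - 24) + 24 := by omega
          rw [this]
          exact hadd (w - 24) 24 (ih (w - 24) (by omega)) (ih 24 (by omega))
        · have : w = n + (w - n) := by omega
          rw [this]
          exact hadd n (w - n) (ih n (by omega)) (ih (w - n) (by omega))
    · have : n + n - 8 = n + (n - 8) := by omega
      rw [this]
      exact hadd n (n - 8) (ih n (by omega)) (ih (n - 8) (by omega))
    · exact hadd n n (ih n (by omega)) (ih n (by omega))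

theorem spec_RM_m_sub_3 (m : ℕ) (hm : 6 ≤ m) :
    spec (m - 3) m =
      ({0, 8} : Set ℕ) ∪ {w | Even w ∧ 12 ≤ w ∧ w ≤ 2 ^ m - 12} ∪ {2 ^ m - 8, 2 ^ m} := by
  apply Set.Subset.antisymm
  · exact spec_subset_rhs hm
  · intro w hw
    simp only [Set.mem_union, Set.mem_insert_iff, Set.mem_singleton_iff,
      Set.mem_setOf_eq, Nat.even_iff] at hw
    exact rhs_mem_spec m hm w (by tauto)
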